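/- arXiv:2101.04346 — 5 statements merged into one kernel-verified Lean document; each statement's English description precedes it below -/
import Mathlib

section
/- Let X and Z be bounded real-valued random variables with Cov(X, Z) ≠ 0. Then the IV weight function λ(x) = Cov(𝟙{X ≥ x}, Z)/Cov(X, Z) integrates to one: ∫ λ(x) dx = 1. -/
open MeasureTheory

/-- Covariance of two real-valued random variables: `Cov(A,B) = E[AB] - E[A]E[B]`. -/
noncomputable def Cov {Ω : Type*} [MeasurableSpace Ω] (μ : Measure Ω) (A B : Ω → ℝ) : ℝ :=
  (∫ ω, A ω * B ω ∂μ) - (∫ ω, A ω ∂μ) * (∫ ω, B ω ∂μ)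

lemma integrable_of_bdd {Ω : Type*} [MeasurableSpace Ω] (μ : Measure Ω) [IsProbabilityMeasure μ]
    (f : Ω → ℝ) (hf : Measurable f) (M : ℝ) (h : ∀ ω, |f ω| ≤ M) : Integrable f μ :=
  ⟨hf.aestronglyMeasurable, HasFiniteIntegral.of_bounded (C := M) (Filter.Eventually.of_forall h)⟩

lemma indicator_diff_integral (a : ℝ) :
    (∫ x : ℝ, ((if a ≥ x then (1:ℝ) else 0) - (if (0:ℝ) ≥ x then 1 else 0))) = a := by
  have key : (fun x : ℝ => ((if a ≥ x then (1:ℝ) else 0) - (if (0:ℝ) ≥ x then 1 else 0)))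
      = fun x => Set.indicator (Set.Ioc 0 a) (fun _ => (1:ℝ)) x
          - Set.indicator (Set.Ioc a 0) (fun _ => (1:ℝ)) x := by
    funext x
    by_cases h1 : x ≤ a <;> by_cases h2 : x ≤ 0
    · have m1 : x ∉ Set.Ioc 0 a := by simp [Set.mem_Ioc]; intro h; linarith
      have m2 : x ∉ Set.Ioc a 0 := by simp [Set.mem_Ioc]; intro h; linarith
      simp [Set.indicator_of_notMem m1, Set.indicator_of_notMem m2, ge_iff_le, h1, h2]
    · have m1 : x ∈ Set.Ioc 0 a := ⟨not_le.mp h2, h1⟩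
      have m2 : x ∉ Set.Ioc a 0 := by simp [Set.mem_Ioc]; intro h; linarith
      simp [Set.indicator_of_mem m1, Set.indicator_of_notMem m2, ge_iff_le, h1, h2]
    · have m1 : x ∉ Set.Ioc 0 a := by simp [Set.mem_Ioc]; intro h; linarith
      have m2 : x ∈ Set.Ioc a 0 := ⟨not_le.mp h1, h2⟩
      simp [Set.indicator_of_notMem m1, Set.indicator_of_mem m2, ge_iff_le, h1, h2]
    · have m1 : x ∉ Set.Ioc 0 a := by simp [Set.mem_Ioc]; intro h; linarith
      have m2 : x ∉ Set.Ioc a 0 := by simp [Set.mem_Ioc]; intro h; linarith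
      simp [Set.indicator_of_notMem m1, Set.indicator_of_notMem m2, ge_iff_le, h1, h2]
  rw [key]
  have hint : ∀ b c : ℝ, Integrable (Set.indicator (Set.Ioc b c) (fun _ => (1:ℝ))) := by
    intro b c
    rw [integrable_indicator_iff measurableSet_Ioc]
    exact (integrableOn_const_iff (C := (1:ℝ))).mpr (Or.inr (by simp [Real.volume_Ioc]))
  rw [integral_sub (hint 0 a) (hint a 0), integral_indicator_const _ measurableSet_Ioc,
    integral_indicator_const _ measurableSet_Ioc]
  simp only [smul_eq_mul, mul_one, Real.volume_Ioc, sub_zero, zero_sub]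
  rcases le_total 0 a with h | h
  · simp only [Real.volume_real_Ioc]; rw [max_eq_left (by linarith : (0:ℝ) ≤ a - 0), max_eq_right (by linarith : 0 - a ≤ (0:ℝ))]; simp
  · simp only [Real.volume_real_Ioc]; rw [max_eq_right (by linarith : a - 0 ≤ (0:ℝ)), max_eq_left (by linarith : (0:ℝ) ≤ 0 - a)]; simp

theorem stmt_3 {Ω : Type*} [MeasurableSpace Ω] (μ : Measure Ω) [IsProbabilityMeasure μ]
    (X Z : Ω → ℝ) (hXm : Measurable X) (hZm : Measurable Z)
    (MX MZ : ℝ) (hXbdd : ∀ ω, |X ω| ≤ MX) (hZbdd : ∀ ω, |Z ω| ≤ MZ)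
    (hcov : Cov μ X Z ≠ 0) :
    (∫ x : ℝ, Cov μ (fun ω => if X ω ≥ x then (1:ℝ) else 0) Z / Cov μ X Z) = 1 := by
  set c := ∫ ω, Z ω ∂μ with hc
  set W := fun ω => Z ω - c with hWdef
  set g : ℝ → Ω → ℝ := fun x ω =>
    ((if X ω ≥ x then (1:ℝ) else 0) - (if (0:ℝ) ≥ x then 1 else 0)) * W ω with hgdef
  have hZint : Integrable Z μ := integrable_of_bdd μ Z hZm MZ hZbdd
  have hWint : Integrable W μ := hZint.sub (integrable_const c)
  have hWzero : ∫ ω, W ω ∂μ = 0 := by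
    have h2 : (∫ ω, (Z ω - c) ∂μ) = (∫ ω, Z ω ∂μ) - c := by
      rw [integral_sub hZint (integrable_const c), integral_const, probReal_univ]
      norm_num
    rw [hWdef, h2]
    simp [hc]
  have hWbdd : ∀ ω, |W ω| ≤ MZ + |c| := by
    intro ω
    have h1 : |Z ω - c| ≤ |Z ω| + |c| := abs_sub _ _
    have h2 := hZbdd ω
    calc |W ω| = |Z ω - c| := rfl
      _ ≤ |Z ω| + |c| := h1
      _ ≤ MZ + |c| := by linarith
  -- Step A
  have stepA : ∀ x : ℝ, Cov μ (fun ω => if X ω ≥ x then (1:ℝ) else 0) Z = ∫ ω, g x ω ∂μ := by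
    intro x
    set A : Ω → ℝ := fun ω => if X ω ≥ x then (1:ℝ) else 0 with hA
    set d : ℝ := if (0:ℝ) ≥ x then 1 else 0 with hd
    have hAm : Measurable A := Measurable.ite (measurableSet_le measurable_const hXm) measurable_const measurable_const
    have hAbdd : ∀ ω, |A ω| ≤ 1 := by intro ω; by_cases h : X ω ≥ x <;> simp [hA, h]
    have hAint : Integrable A μ := integrable_of_bdd μ A hAm 1 hAbdd
    have hAZint : Integrable (fun ω => A ω * Z ω) μ := by
      apply integrable_of_bdd μ _ (hAm.mul hZm) MZ
      intro ω
      rw [Pi.mul_apply, abs_mul]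
      calc |A ω| * |Z ω| ≤ 1 * |Z ω| := by
            apply mul_le_mul_of_nonneg_right (hAbdd ω) (abs_nonneg _)
        _ ≤ MZ := by rw [one_mul]; exact hZbdd ω
    have key : ∀ ω, g x ω = (A ω * Z ω - c * A ω) - d * W ω := by
      intro ω; simp only [hgdef, hWdef, hA, hd]; ring
    calc Cov μ A Z = (∫ ω, A ω * Z ω ∂μ) - c * (∫ ω, A ω ∂μ) := by
          rw [Cov]; ring
      _ = ∫ ω, (A ω * Z ω - c * A ω) ∂μ - d * ∫ ω, W ω ∂μ := by
          rw [integral_sub hAZint (hAint.const_mul c), integral_const_mul, hWzero, mul_zero, sub_zero]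
      _ = ∫ ω, ((A ω * Z ω - c * A ω) - d * W ω) ∂μ := by
          have h2 : Integrable (fun ω => A ω * Z ω - c * A ω) μ := hAZint.sub (hAint.const_mul c)
          rw [integral_sub h2 (hWint.const_mul d), integral_const_mul]
      _ = ∫ ω, g x ω ∂μ := by exact (integral_congr_ae (Filter.Eventually.of_forall (fun ω => (key ω).symm)))
  -- Step B
  have stepB : ∀ ω, (∫ x : ℝ, g x ω) = X ω * W ω := by
    intro ω
    simp only [hgdef]
    rw [integral_mul_const, indicator_diff_integral]
  -- Step C
  have hXint : Integrable X μ := integrable_of_bdd μ X hXm MX hXbdd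
  have hXZint : Integrable (fun ω => X ω * Z ω) μ := by
    apply integrable_of_bdd μ _ (hXm.mul hZm) (MX * MZ)
    intro ω
    rw [Pi.mul_apply, abs_mul]
    exact mul_le_mul (hXbdd ω) (hZbdd ω) (abs_nonneg _) ((abs_nonneg _).trans (hXbdd ω))
  have stepC : (∫ ω, X ω * W ω ∂μ) = Cov μ X Z := by
    have : ∀ ω, X ω * W ω = X ω * Z ω - X ω * c := by intro ω; simp only [hWdef]; ring
    rw [integral_congr_ae (Filter.Eventually.of_forall this),
      integral_sub hXZint (hXint.mul_const c), integral_mul_const, Cov]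
  -- Step D: integrability on the product
  set M := max MX 0 with hM
  set K := MZ + |c| with hK
  have hΩ : Nonempty Ω := by
    by_contra h
    rw [not_nonempty_iff] at h
    have h1 : μ Set.univ = 1 := measure_univ
    rw [Set.univ_eq_empty_iff.mpr h] at h1
    simp at h1
  have hMZnn : 0 ≤ MZ := le_trans (abs_nonneg _) (hZbdd hΩ.some)
  have hKnn : 0 ≤ K := by rw [hK]; positivity
  have hMXM : MX ≤ M := le_max_left _ _
  have hMnn : (0:ℝ) ≤ M := le_max_right _ _
  set s : Set (ℝ × Ω) := Set.Icc (-M) M ×ˢ (Set.univ : Set Ω) with hs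
  have hsm : MeasurableSet s := measurableSet_Icc.prod MeasurableSet.univ
  have hGm : Measurable (Function.uncurry g) := by
    apply Measurable.mul
    · apply Measurable.sub
      · exact Measurable.ite (measurableSet_le measurable_fst (hXm.comp measurable_snd))
          measurable_const measurable_const
      · exact Measurable.ite (measurableSet_le measurable_fst measurable_const)
          measurable_const measurable_const
    · exact (hZm.comp measurable_snd).sub measurable_const
  have hbound : ∀ p : ℝ × Ω, ‖Function.uncurry g p‖ ≤ s.indicator (fun _ => K) p := by
    rintro ⟨x, ω⟩
    by_cases hx : x ∈ Set.Icc (-M) M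
    · have hmem : (x, ω) ∈ s := ⟨hx, Set.mem_univ ω⟩
      rw [Set.indicator_of_mem hmem]
      have hdiff : |(if X ω ≥ x then (1:ℝ) else 0) - (if (0:ℝ) ≥ x then 1 else 0)| ≤ 1 := by
        by_cases h1 : X ω ≥ x <;> by_cases h2 : (0:ℝ) ≥ x <;> simp [h1, h2]
      calc ‖Function.uncurry g (x, ω)‖
          = |(if X ω ≥ x then (1:ℝ) else 0) - (if (0:ℝ) ≥ x then 1 else 0)| * |W ω| := by
            simp [Function.uncurry, hgdef, abs_mul]
        _ ≤ 1 * K := mul_le_mul hdiff (hWbdd ω) (abs_nonneg _) zero_le_one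
        _ = K := one_mul K
    · have hmem : (x, ω) ∉ s := fun h => hx h.1
      rw [Set.indicator_of_notMem hmem]
      rw [Set.mem_Icc, not_and_or] at hx
      have hzero : (if X ω ≥ x then (1:ℝ) else 0) - (if (0:ℝ) ≥ x then 1 else 0) = 0 := by
        rcases hx with hx | hx
        · push_neg at hx
          have hX1 : X ω ≥ x := le_trans (le_of_lt (lt_of_lt_of_le hx (by linarith [neg_le_neg hMXM, abs_le.mp (hXbdd ω)] : -M ≤ X ω))) le_rfl
          have h0 : (0:ℝ) ≥ x := le_of_lt (lt_of_lt_of_le hx (by linarith))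
          simp [hX1, h0]
        · push_neg at hx
          have hX1 : ¬ (X ω ≥ x) := by
            have := (abs_le.mp (hXbdd ω)).2
            intro h; linarith
          have h0 : ¬ ((0:ℝ) ≥ x) := by intro h; linarith
          simp [hX1, h0]
      simp [Function.uncurry, hgdef, hzero]
  have hboundInt : Integrable (s.indicator (fun _ => K)) ((volume : Measure ℝ).prod μ) := by
    rw [integrable_indicator_iff hsm]
    apply (integrableOn_const_iff (C := K)).mpr
    right
    rw [hs, Measure.prod_prod]
    simp only [measure_univ, mul_one]
    exact measure_Icc_lt_top
  have hGint : Integrable (Function.uncurry g) ((volume : Measure ℝ).prod μ) :=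
    Integrable.mono' hboundInt hGm.aestronglyMeasurable (Filter.Eventually.of_forall hbound)
  -- Step E: assemble
  have swap : (∫ x : ℝ, ∫ ω, g x ω ∂μ) = ∫ ω, (∫ x : ℝ, g x ω) ∂μ :=
    integral_integral_swap hGint
  have main : (∫ x : ℝ, Cov μ (fun ω => if X ω ≥ x then (1:ℝ) else 0) Z) = Cov μ X Z := by
    calc (∫ x : ℝ, Cov μ (fun ω => if X ω ≥ x then (1:ℝ) else 0) Z)
        = ∫ x : ℝ, ∫ ω, g x ω ∂μ := by
          exact integral_congr_ae (Filter.Eventually.of_forall stepA)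
      _ = ∫ ω, (∫ x : ℝ, g x ω) ∂μ := swap
      _ = ∫ ω, X ω * W ω ∂μ := integral_congr_ae (Filter.Eventually.of_forall stepB)
      _ = Cov μ X Z := stepC
  rw [integral_div, main, div_self hcov]
end

section
/- Let X be a bounded real-valued random variable with Var(X) > 0. Then the OLS weight function λ_OLS(x) = Cov(𝟙{X ≥ x}, X)/Var(X) is nonnegative for every x and integrates to one. -/
open MeasureTheory

theorem stmt_4 {Ω : Type*} [MeasurableSpace Ω] (μ : Measure Ω) [IsProbabilityMeasure μ]
    (X : Ω → ℝ) (hXm : Measurable X)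
    (MX : ℝ) (hXbdd : ∀ ω, |X ω| ≤ MX)
    (hvar : Cov μ X X > 0) :
    (∀ x : ℝ, Cov μ (fun ω => if X ω ≥ x then (1:ℝ) else 0) X / Cov μ X X ≥ 0) ∧
      (∫ x : ℝ, Cov μ (fun ω => if X ω ≥ x then (1:ℝ) else 0) X / Cov μ X X) = 1 := by
  set m : ℝ := ∫ ω, X ω ∂μ with hm
  -- basic integrability facts
  have hX_int : Integrable X μ :=
    ⟨hXm.aestronglyMeasurable, HasFiniteIntegral.of_bounded (ae_of_all μ hXbdd)⟩
  have hXX_int : Integrable (fun ω => X ω * X ω) μ := by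
    refine ⟨(hXm.mul hXm).aestronglyMeasurable,
      HasFiniteIntegral.of_bounded (C := MX * MX) (ae_of_all μ fun ω => ?_)⟩
    have h := hXbdd ω
    have h0 : (0:ℝ) ≤ MX := le_trans (abs_nonneg _) h
    calc ‖X ω * X ω‖ = |X ω| * |X ω| := by rw [Real.norm_eq_abs, abs_mul]
      _ ≤ MX * MX := mul_le_mul h h (abs_nonneg _) h0
  have hSmeas : ∀ x : ℝ, MeasurableSet {ω | X ω ≥ x} := fun x =>
    measurableSet_le measurable_const hXm
  have hind_meas : ∀ x : ℝ, Measurable (fun ω => if X ω ≥ x then (1:ℝ) else 0) := fun x =>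
    Measurable.ite (hSmeas x) measurable_const measurable_const
  have hind_int : ∀ x : ℝ, Integrable (fun ω => if X ω ≥ x then (1:ℝ) else 0) μ := fun x =>
    ⟨(hind_meas x).aestronglyMeasurable,
      HasFiniteIntegral.of_bounded (C := 1) (ae_of_all μ fun ω => by
        by_cases h : X ω ≥ x <;> simp [h])⟩
  have hindX_int : ∀ x : ℝ, Integrable (fun ω => (if X ω ≥ x then (1:ℝ) else 0) * X ω) μ :=
    fun x =>
    ⟨((hind_meas x).mul hXm).aestronglyMeasurable,
      HasFiniteIntegral.of_bounded (C := MX) (ae_of_all μ fun ω => by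
        by_cases h : X ω ≥ x <;>
          simp [h, Real.norm_eq_abs, abs_nonneg, hXbdd ω,
            le_trans (abs_nonneg (X ω)) (hXbdd ω)])⟩
  -- indicator as Set.indicator
  have hind_eq : ∀ x : ℝ, ∀ ω, (if X ω ≥ x then (1:ℝ) else 0)
      = Set.indicator {ω | X ω ≥ x} (fun _ => (1:ℝ)) ω := by
    intro x ω
    by_cases h : X ω ≥ x <;> simp [Set.indicator_apply, h]
  -- the basic covariance identities
  have hint_ind : ∀ x : ℝ, (∫ ω, (if X ω ≥ x then (1:ℝ) else 0) ∂μ)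
      = (μ {ω | X ω ≥ x}).toReal := by
    intro x
    rw [integral_congr_ae (ae_of_all μ (hind_eq x))]
    rw [integral_indicator_const (1:ℝ) (hSmeas x)]
    simp
    rfl
  have hint_indX : ∀ x : ℝ, (∫ ω, (if X ω ≥ x then (1:ℝ) else 0) * X ω ∂μ)
      = ∫ ω in {ω | X ω ≥ x}, X ω ∂μ := by
    intro x
    have : ∀ ω, (if X ω ≥ x then (1:ℝ) else 0) * X ω
        = Set.indicator {ω | X ω ≥ x} X ω := by
      intro ω
      by_cases h : X ω ≥ x <;> simp [Set.indicator_apply, h]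
    rw [integral_congr_ae (ae_of_all μ this), integral_indicator (hSmeas x)]
  -- nonnegativity of the covariance
  have gnn : ∀ x : ℝ, 0 ≤ Cov μ (fun ω => if X ω ≥ x then (1:ℝ) else 0) X := by
    intro x
    set S : Set Ω := {ω | X ω ≥ x} with hS
    set p : ℝ := (μ S).toReal with hp
    set q : ℝ := (μ Sᶜ).toReal with hq
    have hp0 : 0 ≤ p := ENNReal.toReal_nonneg
    have hq0 : 0 ≤ q := ENNReal.toReal_nonneg
    have hpq : p + q = 1 := by
      rw [hp, hq, ← ENNReal.toReal_add (measure_ne_top μ S) (measure_ne_top μ Sᶜ),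
        measure_add_measure_compl (hSmeas x)]
      simp
    have hA : x * p ≤ ∫ ω in S, X ω ∂μ := by
      have := setIntegral_mono_on (integrable_const x).integrableOn
        hX_int.integrableOn (hSmeas x) (fun ω hω => hω)
      rwa [setIntegral_const, smul_eq_mul, mul_comm] at this
    have hB : (∫ ω in Sᶜ, X ω ∂μ) ≤ x * q := by
      have := setIntegral_mono_on hX_int.integrableOn
        (integrable_const x).integrableOn (hSmeas x).compl
        (fun ω hω => le_of_lt (lt_of_not_ge hω))
      rwa [setIntegral_const, smul_eq_mul, mul_comm] at this
    have hsplit : m = (∫ ω in S, X ω ∂μ) + ∫ ω in Sᶜ, X ω ∂μ :=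
      (integral_add_compl (hSmeas x) hX_int).symm
    have hcov : Cov μ (fun ω => if X ω ≥ x then (1:ℝ) else 0) X
        = (∫ ω in S, X ω ∂μ) - p * m := by
      rw [Cov, hint_indX x, hint_ind x, ← hm]
    have h1 := mul_le_mul_of_nonneg_left hA hq0
    have h2 := mul_le_mul_of_nonneg_left hB hp0
    have hq1 : q = 1 - p := by linarith
    have key : (0:ℝ) ≤ q * (∫ ω in S, X ω ∂μ) - p * ∫ ω in Sᶜ, X ω ∂μ := by nlinarith [h1, h2]
    rw [hq1] at key
    rw [hcov, hsplit]
    nlinarith [key]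
  refine ⟨fun x => div_nonneg (gnn x) (le_of_lt hvar), ?_⟩
  -- rewrite covariance pointwise
  have g_eq : ∀ x : ℝ, Cov μ (fun ω => if X ω ≥ x then (1:ℝ) else 0) X
      = ∫ ω, (if X ω ≥ x then (1:ℝ) else 0) * (X ω - m) ∂μ := by
    intro x
    have : ∀ ω, (if X ω ≥ x then (1:ℝ) else 0) * (X ω - m)
        = (if X ω ≥ x then (1:ℝ) else 0) * X ω
          - (if X ω ≥ x then (1:ℝ) else 0) * m := fun ω => mul_sub _ _ _
    rw [integral_congr_ae (ae_of_all μ this),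
      integral_sub (hindX_int x) ((hind_int x).mul_const m), integral_mul_const, Cov, ← hm]
  -- the main integral computation
  set s : Set ℝ := Set.Ioc (-MX) MX with hs
  have hvanish : ∀ x : ℝ, x ∉ s →
      Cov μ (fun ω => if X ω ≥ x then (1:ℝ) else 0) X / Cov μ X X = 0 := by
    intro x hx
    have : Cov μ (fun ω => if X ω ≥ x then (1:ℝ) else 0) X = 0 := by
      rw [g_eq x]
      rcases not_and_or.mp hx with h | h
      · -- x ≤ -MX : indicator is 1 everywhere
        push_neg at h
        have : ∀ ω, (if X ω ≥ x then (1:ℝ) else 0) * (X ω - m) = X ω - m := by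
          intro ω
          have : x ≤ X ω := le_trans h (neg_le_of_abs_le (hXbdd ω))
          simp [this]
        rw [integral_congr_ae (ae_of_all μ this), integral_sub hX_int (integrable_const m)]
        simp [← hm]
      · -- x > MX : indicator is 0 everywhere
        push_neg at h
        have : ∀ ω, (if X ω ≥ x then (1:ℝ) else 0) * (X ω - m) = 0 := by
          intro ω
          have : ¬ (x ≤ X ω) := not_le.mpr (lt_of_le_of_lt (le_abs_self _)
            (lt_of_le_of_lt (hXbdd ω) h))
          simp [this]
        rw [integral_congr_ae (ae_of_all μ this)]
        simp
    rw [this, zero_div]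
  rw [← setIntegral_eq_integral_of_forall_compl_eq_zero hvanish]
  -- pull out the division
  rw [integral_div]
  -- Fubini setup
  have hne : Nonempty Ω := by
    by_contra hne
    rw [not_nonempty_iff] at hne
    have h1 : μ Set.univ = 0 := by
      rw [Set.univ_eq_empty_iff.mpr hne]; exact measure_empty
    rw [measure_univ] at h1
    exact one_ne_zero h1
  have hM0 : (0:ℝ) ≤ MX := le_trans (abs_nonneg _) (hXbdd hne.some)
  haveI : IsFiniteMeasure (volume.restrict s) := by
    constructor
    rw [Measure.restrict_apply_univ, hs, Real.volume_Ioc]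
    exact ENNReal.ofReal_lt_top
  have hF_meas : Measurable (fun p : ℝ × Ω => (if X p.2 ≥ p.1 then (1:ℝ) else 0) * (X p.2 - m)) := by
    apply Measurable.mul
    · exact Measurable.ite (measurableSet_le measurable_fst (hXm.comp measurable_snd))
        measurable_const measurable_const
    · exact (hXm.comp measurable_snd).sub measurable_const
  have hF_int : Integrable (fun p : ℝ × Ω => (if X p.2 ≥ p.1 then (1:ℝ) else 0) * (X p.2 - m))
      ((volume.restrict s).prod μ) := by
    refine ⟨hF_meas.aestronglyMeasurable,
      HasFiniteIntegral.of_bounded (C := MX + |m|) (ae_of_all _ fun p => ?_)⟩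
    have h1 : |if X p.2 ≥ p.1 then (1:ℝ) else 0| ≤ 1 := by
      by_cases h : X p.2 ≥ p.1 <;> simp [h]
    calc ‖(if X p.2 ≥ p.1 then (1:ℝ) else 0) * (X p.2 - m)‖
        = |if X p.2 ≥ p.1 then (1:ℝ) else 0| * |X p.2 - m| := by
          rw [Real.norm_eq_abs, abs_mul]
      _ ≤ 1 * (MX + |m|) := by
          apply mul_le_mul h1 _ (abs_nonneg _) zero_le_one
          calc |X p.2 - m| ≤ |X p.2| + |m| := abs_sub _ _
            _ ≤ MX + |m| := add_le_add_left (hXbdd p.2) _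
      _ = MX + |m| := one_mul _
  have hswap : (∫ x in s, ∫ ω, (if X ω ≥ x then (1:ℝ) else 0) * (X ω - m) ∂μ)
      = ∫ ω, (∫ x in s, (if X ω ≥ x then (1:ℝ) else 0)) * (X ω - m) ∂μ := by
    rw [integral_integral_swap hF_int]
    congr 1
    ext ω
    rw [integral_mul_const]
  -- compute the inner integral
  have hinner : ∀ ω, (∫ x in s, (if X ω ≥ x then (1:ℝ) else 0)) = X ω + MX := by
    intro ω
    have h1 : ∀ x : ℝ, (if X ω ≥ x then (1:ℝ) else 0)
        = Set.indicator (Set.Iic (X ω)) (fun _ => (1:ℝ)) x := by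
      intro x
      by_cases h : X ω ≥ x <;> simp [Set.indicator_apply, Set.mem_Iic, h]
    rw [integral_congr_ae (ae_of_all _ h1), setIntegral_indicator measurableSet_Iic,
      setIntegral_const]
    have hset : s ∩ Set.Iic (X ω) = Set.Ioc (-MX) (X ω) := by
      rw [hs]
      ext y
      simp only [Set.mem_inter_iff, Set.mem_Ioc, Set.mem_Iic]
      constructor
      · rintro ⟨⟨h1, _⟩, h2⟩; exact ⟨h1, h2⟩
      · rintro ⟨h1, h2⟩; exact ⟨⟨h1, le_trans h2 (le_of_abs_le (hXbdd ω))⟩, h2⟩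
    rw [hset, measureReal_def, Real.volume_Ioc]
    rw [ENNReal.toReal_ofReal (by linarith [neg_le_of_abs_le (hXbdd ω)])]
    simp [sub_neg_eq_add]
  -- final computation
  have hfinal : (∫ ω, (X ω + MX) * (X ω - m) ∂μ) = Cov μ X X := by
    have hexp : ∀ ω, (X ω + MX) * (X ω - m)
        = X ω * X ω + ((MX - m) * X ω - MX * m) := fun ω => by ring
    have hint2 : Integrable (fun ω => (MX - m) * X ω - MX * m) μ :=
      (hX_int.const_mul _).sub (integrable_const _)
    have e1 : (∫ ω, (X ω * X ω + ((MX - m) * X ω - MX * m)) ∂μ)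
        = (∫ ω, X ω * X ω ∂μ) + ∫ ω, ((MX - m) * X ω - MX * m) ∂μ :=
      integral_add hXX_int hint2
    have e2 : (∫ ω, ((MX - m) * X ω - MX * m) ∂μ)
        = (∫ ω, (MX - m) * X ω ∂μ) - ∫ _ω, (MX : ℝ) * m ∂μ :=
      integral_sub (hX_int.const_mul _) (integrable_const _)
    rw [integral_congr_ae (ae_of_all μ hexp), e1, e2, integral_const_mul, integral_const]
    simp only [measureReal_def, measure_univ, ENNReal.toReal_one, one_smul]
    rw [Cov]
    ring
  have : (∫ x in s, Cov μ (fun ω => if X ω ≥ x then (1:ℝ) else 0) X) = Cov μ X X := by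
    calc (∫ x in s, Cov μ (fun ω => if X ω ≥ x then (1:ℝ) else 0) X)
        = ∫ x in s, ∫ ω, (if X ω ≥ x then (1:ℝ) else 0) * (X ω - m) ∂μ := by
          apply integral_congr_ae (ae_of_all _ fun x => g_eq x)
      _ = ∫ ω, (∫ x in s, (if X ω ≥ x then (1:ℝ) else 0)) * (X ω - m) ∂μ := hswap
      _ = ∫ ω, (X ω + MX) * (X ω - m) ∂μ := by
          apply integral_congr_ae (ae_of_all _ fun ω => by rw [hinner ω])
      _ = Cov μ X X := hfinal
  rw [this, div_self (ne_of_gt hvar)]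
end

section
/- Let Z be an integrable real-valued random variable with mean μ = E[Z], and let v ∈ ℝ. Let Z₁, Z₂ be independent copies of Z. Then E[𝟙{Z ≥ v} · (Z − μ)] = E[(Z₁ − Z₂) · 𝟙{Z₁ ≥ v > Z₂}]. -/
open MeasureTheory

theorem stmt_6 {Ω : Type*} [MeasurableSpace Ω] (μ : Measure Ω) [IsProbabilityMeasure μ]
    (Z Z₁ Z₂ : Ω → ℝ) (v : ℝ)
    (hZ : Integrable Z μ) (hZm : Measurable Z)
    (h1m : Measurable Z₁) (h2m : Measurable Z₂)
    (hindep : ProbabilityTheory.IndepFun Z₁ Z₂ μ)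
    (hd1 : Measure.map Z₁ μ = Measure.map Z μ)
    (hd2 : Measure.map Z₂ μ = Measure.map Z μ) :
    (∫ ω, (if Z ω ≥ v then (1:ℝ) else 0) * (Z ω - ∫ ω', Z ω' ∂μ) ∂μ) =
      ∫ ω, (Z₁ ω - Z₂ ω) * (if Z₁ ω ≥ v ∧ v > Z₂ ω then (1:ℝ) else 0) ∂μ := by
  set m : ℝ := ∫ ω', Z ω' ∂μ with hm_def
  set fa : ℝ → ℝ := fun x => x * (if x ≥ v then 1 else 0) with hfa_def
  set fp : ℝ → ℝ := fun x => if x ≥ v then 1 else 0 with hfp_def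
  set fb : ℝ → ℝ := fun x => x * (if x < v then 1 else 0) with hfb_def
  set fq : ℝ → ℝ := fun x => if x < v then 1 else 0 with hfq_def
  have hSge : MeasurableSet {x : ℝ | x ≥ v} := measurableSet_Ici
  have hSlt : MeasurableSet {x : ℝ | x < v} := measurableSet_Iio
  have hfp : Measurable fp := Measurable.ite hSge measurable_const measurable_const
  have hfq : Measurable fq := Measurable.ite hSlt measurable_const measurable_const
  have hfa : Measurable fa := measurable_id.mul hfp
  have hfb : Measurable fb := measurable_id.mul hfq
  -- transport of integrals to Z
  have transport : ∀ (W : Ω → ℝ), Measurable W → Measure.map W μ = Measure.map Z μ →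
      ∀ f : ℝ → ℝ, Measurable f → ∫ ω, f (W ω) ∂μ = ∫ ω, f (Z ω) ∂μ := by
    intro W hW hd f hf
    rw [← integral_map hW.aemeasurable hf.aestronglyMeasurable, hd,
      integral_map hZm.aemeasurable hf.aestronglyMeasurable]
  -- integrability facts
  have habs : ∀ (f : ℝ → ℝ), (∀ x, |f x| ≤ |x|) → Measurable f → Integrable (fun ω => f (Z ω)) μ := by
    intro f hb hf
    exact hZ.mono (hf.comp hZm).aestronglyMeasurable (ae_of_all _ fun ω => hb (Z ω))
  have hbd : ∀ (W : Ω → ℝ), Measurable W → ∀ (f : ℝ → ℝ), (∀ x, |f x| ≤ 1) → Measurable f →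
      Integrable (fun ω => f (W ω)) μ := by
    intro W hW f hb hf
    exact (integrable_const (1:ℝ)).mono (hf.comp hW).aestronglyMeasurable
      (ae_of_all _ fun ω => by simpa using hb (W ω))
  have hfa_bnd : ∀ x, |fa x| ≤ |x| := by
    intro x; simp only [hfa_def, abs_mul]
    split_ifs <;> simp
  have hfb_bnd : ∀ x, |fb x| ≤ |x| := by
    intro x; simp only [hfb_def, abs_mul]
    split_ifs <;> simp
  have hfp_bnd : ∀ x, |fp x| ≤ 1 := by
    intro x; simp only [hfp_def]; split_ifs <;> simp
  have hfq_bnd : ∀ x, |fq x| ≤ 1 := by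
    intro x; simp only [hfq_def]; split_ifs <;> simp
  have hid : Integrable (id : ℝ → ℝ) (Measure.map Z μ) :=
    (integrable_map_measure aestronglyMeasurable_id hZm.aemeasurable).mpr hZ
  have hZ1 : Integrable Z₁ μ := by
    have h' : Integrable (id : ℝ → ℝ) (Measure.map Z₁ μ) := by rw [hd1]; exact hid
    exact (integrable_map_measure aestronglyMeasurable_id h1m.aemeasurable).mp h'
  have hZ2 : Integrable Z₂ μ := by
    have h' : Integrable (id : ℝ → ℝ) (Measure.map Z₂ μ) := by rw [hd2]; exact hid
    exact (integrable_map_measure aestronglyMeasurable_id h2m.aemeasurable).mp h' 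
  -- main abbreviations
  set a : ℝ := ∫ ω, fa (Z ω) ∂μ with ha_def
  set b : ℝ := ∫ ω, fb (Z ω) ∂μ with hb_def
  set p : ℝ := ∫ ω, fp (Z ω) ∂μ with hp_def
  set q : ℝ := ∫ ω, fq (Z ω) ∂μ with hq_def
  have hia : Integrable (fun ω => fa (Z ω)) μ := habs fa hfa_bnd hfa
  have hib : Integrable (fun ω => fb (Z ω)) μ := habs fb hfb_bnd hfb
  have hip : Integrable (fun ω => fp (Z ω)) μ := hbd Z hZm fp hfp_bnd hfp
  -- a + b = m
  have hab : a + b = m := by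
    rw [ha_def, hb_def, ← integral_add hia hib]
    apply integral_congr_ae
    apply ae_of_all
    intro ω
    simp only [hfa_def, hfb_def]
    rcases lt_or_ge (Z ω) v with h | h
    · simp [h, not_le.mpr h]
    · simp [h, not_lt.mpr h]
  -- p + q = 1
  have hpq : p + q = 1 := by
    rw [hp_def, hq_def, ← integral_add hip (hbd Z hZm fq hfq_bnd hfq)]
    have : ∀ ω, fp (Z ω) + fq (Z ω) = 1 := by
      intro ω
      simp only [hfp_def, hfq_def]
      rcases lt_or_ge (Z ω) v with h | h
      · simp [h, not_le.mpr h]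
      · simp [h, not_lt.mpr h]
    rw [integral_congr_ae (ae_of_all _ this)]
    simp
  -- LHS = a - m * p
  have hLHS : (∫ ω, (if Z ω ≥ v then (1:ℝ) else 0) * (Z ω - m) ∂μ) = a - m * p := by
    have : ∀ ω, (if Z ω ≥ v then (1:ℝ) else 0) * (Z ω - m) = fa (Z ω) - m * fp (Z ω) := by
      intro ω
      simp only [hfa_def, hfp_def]
      split_ifs <;> ring
    rw [integral_congr_ae (ae_of_all _ this), integral_sub hia (hip.const_mul m),
      integral_const_mul]
  -- RHS
  have hInd1 : ProbabilityTheory.IndepFun (fun ω => fa (Z₁ ω)) (fun ω => fq (Z₂ ω)) μ :=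
    hindep.comp hfa hfq
  have hInd2 : ProbabilityTheory.IndepFun (fun ω => fp (Z₁ ω)) (fun ω => fb (Z₂ ω)) μ :=
    hindep.comp hfp hfb
  have hi1 : Integrable (fun ω => fa (Z₁ ω) * fq (Z₂ ω)) μ := by
    refine hZ1.mono (((hfa.comp h1m).mul (hfq.comp h2m)).aestronglyMeasurable)
      (ae_of_all _ fun ω => ?_)
    calc ‖fa (Z₁ ω) * fq (Z₂ ω)‖ = |fa (Z₁ ω)| * |fq (Z₂ ω)| := by
          simp [abs_mul]
      _ ≤ |Z₁ ω| * 1 := mul_le_mul (hfa_bnd _) (hfq_bnd _) (abs_nonneg _) (abs_nonneg _)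
      _ = ‖Z₁ ω‖ := by simp
  have hi2 : Integrable (fun ω => fp (Z₁ ω) * fb (Z₂ ω)) μ := by
    refine hZ2.mono (((hfp.comp h1m).mul (hfb.comp h2m)).aestronglyMeasurable)
      (ae_of_all _ fun ω => ?_)
    calc ‖fp (Z₁ ω) * fb (Z₂ ω)‖ = |fp (Z₁ ω)| * |fb (Z₂ ω)| := by
          simp [abs_mul]
      _ ≤ 1 * |Z₂ ω| := mul_le_mul (hfp_bnd _) (hfb_bnd _) (abs_nonneg _) zero_le_one
      _ = ‖Z₂ ω‖ := by simp
  have hRHS : (∫ ω, (Z₁ ω - Z₂ ω) * (if Z₁ ω ≥ v ∧ v > Z₂ ω then (1:ℝ) else 0) ∂μ)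
      = a * q - p * b := by
    have hpt : ∀ ω, (Z₁ ω - Z₂ ω) * (if Z₁ ω ≥ v ∧ v > Z₂ ω then (1:ℝ) else 0)
        = fa (Z₁ ω) * fq (Z₂ ω) - fp (Z₁ ω) * fb (Z₂ ω) := by
      intro ω
      simp only [hfa_def, hfq_def, hfp_def, hfb_def]
      by_cases h1 : Z₁ ω ≥ v <;> by_cases h2 : Z₂ ω < v <;>
        simp [h1, h2, and_comm]
    rw [integral_congr_ae (ae_of_all _ hpt), integral_sub hi1 hi2,
      hInd1.integral_fun_mul_eq_mul_integral ((hfa.comp h1m).aestronglyMeasurable)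
        ((hfq.comp h2m).aestronglyMeasurable),
      hInd2.integral_fun_mul_eq_mul_integral ((hfp.comp h1m).aestronglyMeasurable)
        ((hfb.comp h2m).aestronglyMeasurable),
      transport Z₁ h1m hd1 fa hfa, transport Z₂ h2m hd2 fq hfq,
      transport Z₁ h1m hd1 fp hfp, transport Z₂ h2m hd2 fb hfb]
  rw [hLHS, hRHS]
  linear_combination p * hab - a * hpq
end

section
/- Let Y, X, Z, W be random variables where W is a random vector in ℝᵏ with E[WWᵀ] invertible. Define L(R|W) = Wᵀ E[WWᵀ]⁻¹ E[WR] (linear projection) and define β* = E[(Y − E[Y|W])(Z − E[Z|W])] / E[(X − E[X|W])(Z − E[Z|W])], assuming the denominator is nonzero. Then E[(Y − L(Y|W))(Z − L(Z|W))] = β* · E[(X − L(X|W))(Z − L(Z|W))] + E[(E[Y − β*X | W] − L(Y − β*X | W))(E[Z|W] − L(Z|W))]. -/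
open MeasureTheory

/-- Population linear projection of `R` onto the random vector `W`:
`L(R|W) = Wᵀ E[WWᵀ]⁻¹ E[WR]`. -/
noncomputable def Lproj {Ω : Type*} [MeasurableSpace Ω] (μ : Measure Ω) (k : ℕ)
    (W : Ω → Fin k → ℝ) (R : Ω → ℝ) (ω : Ω) : ℝ :=
  ∑ i, (((Matrix.of fun i j => ∫ ω', W ω' i * W ω' j ∂μ : Matrix (Fin k) (Fin k) ℝ))⁻¹.mulVec
      (fun i => ∫ ω', W ω' i * R ω' ∂μ)) i * W ω i

/-- Conditional expectation of `R` given the σ-algebra generated by the random vector `W`. -/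
noncomputable def condExpW {Ω : Type*} [inst : MeasurableSpace Ω] (μ : Measure Ω) (k : ℕ)
    (W : Ω → Fin k → ℝ) (R : Ω → ℝ) : Ω → ℝ :=
  MeasureTheory.condExp (MeasurableSpace.comap W inferInstance) (m₀ := inst) μ R

section Aux

/-- Product of two `L²` functions is integrable. -/
lemma aux_mul_integrable {Ω : Type*} [MeasurableSpace Ω] {μ : Measure Ω}
    {f g : Ω → ℝ} (hf : MemLp f 2 μ) (hg : MemLp g 2 μ) :
    Integrable (fun ω => f ω * g ω) μ := by
  have h : MemLp (g • f) 1 μ := hf.smul hg (hpqr := ⟨by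
    simp only [one_div, inv_one]
    exact ENNReal.inv_two_add_inv_two⟩)
  have h' : Integrable (g • f) μ := memLp_one_iff_integrable.mp h
  have : (fun ω => f ω * g ω) = g • f := by funext ω; simp [mul_comm]
  rwa [this]

/-- Conditional expectation of an `L²` function is `L²` (on a probability space). -/
lemma aux_memLp_condexp {Ω : Type*} {m : MeasurableSpace Ω} {m0 : MeasurableSpace Ω}
    {μ : Measure Ω} [IsProbabilityMeasure μ] (hm : m ≤ m0)
    {f : Ω → ℝ} (hf : MemLp f 2 μ) : MemLp (μ[f|m]) 2 μ := by
  have hfi : Integrable f μ := hf.integrable one_le_two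
  set F := hf.toLp f with hF
  have hg : MemLp ((condExpL2 ℝ ℝ hm F : Ω →₂[μ] ℝ) : Ω → ℝ) 2 μ := Lp.memLp _
  have heq : ((condExpL2 ℝ ℝ hm F : Ω →₂[μ] ℝ) : Ω → ℝ) =ᵐ[μ] μ[f|m] := by
    refine ae_eq_condExp_of_forall_setIntegral_eq hm hfi
      (fun s _ _ => (hg.integrable one_le_two).integrableOn)
      (fun s hs hμs => ?_) (aestronglyMeasurable_condExpL2 hm F)
    rw [integral_condExpL2_eq hm F hs hμs.ne]
    exact setIntegral_congr_ae (hm s hs) ((hf.coeFn_toLp).mono fun x hx _ => hx)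
  exact hg.ae_eq heq

/-- Orthogonality of the conditional-expectation residual to `m`-measurable `L²` functions. -/
lemma aux_ortho {Ω : Type*} {m : MeasurableSpace Ω} {m0 : MeasurableSpace Ω}
    {μ : Measure Ω} [IsProbabilityMeasure μ] (hm : m ≤ m0)
    {f g : Ω → ℝ} (hf : MemLp f 2 μ) (hg : MemLp g 2 μ) (hgm : StronglyMeasurable[m] g) :
    ∫ ω, (f ω - (μ[f|m]) ω) * g ω ∂μ = 0 := by
  have hEf : MemLp (μ[f|m]) 2 μ := aux_memLp_condexp hm hf
  have hfi : Integrable f μ := hf.integrable one_le_two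
  have hres : MemLp (fun ω => f ω - (μ[f|m]) ω) 2 μ := hf.sub hEf
  have h1 : Integrable (g * fun ω => f ω - (μ[f|m]) ω) μ := aux_mul_integrable hg hres
  have h2 : Integrable (fun ω => f ω - (μ[f|m]) ω) μ := hres.integrable one_le_two
  have key : μ[(g * fun ω => f ω - (μ[f|m]) ω)|m]
      =ᵐ[μ] g * μ[(fun ω => f ω - (μ[f|m]) ω)|m] :=
    condExp_mul_of_stronglyMeasurable_left hgm h1 h2
  have hz : μ[(fun ω => f ω - (μ[f|m]) ω)|m] =ᵐ[μ] 0 := by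
    have hsub : μ[(f - μ[f|m] : Ω → ℝ)|m] =ᵐ[μ] μ[f|m] - μ[μ[f|m]|m] :=
      condExp_sub hfi integrable_condExp m
    have h2' : μ[μ[f|m]|m] = μ[f|m] :=
      condExp_of_stronglyMeasurable hm stronglyMeasurable_condExp integrable_condExp
    have hfm : (fun ω => f ω - (μ[f|m]) ω) = (f - μ[f|m] : Ω → ℝ) := rfl
    rw [hfm]
    filter_upwards [hsub] with ω hω
    rw [hω]
    simp [h2']
  have hzero : μ[(g * fun ω => f ω - (μ[f|m]) ω)|m] =ᵐ[μ] 0 := by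
    refine key.trans ?_
    filter_upwards [hz] with ω hω
    simp only [Pi.mul_apply, Pi.zero_apply] at hω ⊢
    rw [hω, mul_zero]
  calc ∫ ω, (f ω - (μ[f|m]) ω) * g ω ∂μ
      = ∫ ω, (g * fun ω => f ω - (μ[f|m]) ω) ω ∂μ := by
        congr 1; funext ω; simp [mul_comm]
    _ = ∫ ω, (μ[(g * fun ω => f ω - (μ[f|m]) ω)|m]) ω ∂μ := (integral_condExp hm).symm
    _ = 0 := by rw [integral_congr_ae hzero]; simp

/-- `Lproj` is `L²`. -/
lemma aux_memLp_Lproj {Ω : Type*} [MeasurableSpace Ω] (μ : Measure Ω) (k : ℕ)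
    (W : Ω → Fin k → ℝ) (R : Ω → ℝ)
    (hWi : ∀ i, MemLp (fun ω => W ω i) 2 μ) : MemLp (Lproj μ k W R) 2 μ := by
  unfold Lproj
  exact memLp_finsetSum _ fun i _ => (hWi i).const_mul _

/-- `Lproj` is measurable w.r.t. the σ-algebra generated by `W`. -/
lemma aux_sm_Lproj {Ω : Type*} [MeasurableSpace Ω] (μ : Measure Ω) (k : ℕ)
    (W : Ω → Fin k → ℝ) (R : Ω → ℝ) :
    StronglyMeasurable[MeasurableSpace.comap W inferInstance] (Lproj μ k W R) := by
  have hWm : Measurable[MeasurableSpace.comap W inferInstance] W := fun s hs => ⟨s, hs, rfl⟩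
  refine Measurable.stronglyMeasurable ?_
  exact Finset.measurable_sum _ fun i _ =>
    (measurable_const.mul ((measurable_pi_apply i).comp hWm))

/-- Linearity of `Lproj`. -/
lemma aux_Lproj_sub {Ω : Type*} [MeasurableSpace Ω] (μ : Measure Ω) (k : ℕ)
    (W : Ω → Fin k → ℝ) (Y X : Ω → ℝ) (c : ℝ)
    (hWi : ∀ i, MemLp (fun ω => W ω i) 2 μ) (hY : MemLp Y 2 μ) (hX : MemLp X 2 μ) (ω : Ω) :
    Lproj μ k W (fun ω' => Y ω' - c * X ω') ω = Lproj μ k W Y ω - c * Lproj μ k W X ω := by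
  unfold Lproj
  have hv : (fun i => ∫ ω', W ω' i * (Y ω' - c * X ω') ∂μ)
      = (fun i => ∫ ω', W ω' i * Y ω' ∂μ) - c • (fun i => ∫ ω', W ω' i * X ω' ∂μ) := by
    funext i
    have h1 : Integrable (fun ω' => W ω' i * Y ω') μ := aux_mul_integrable (hWi i) hY
    have h2 : Integrable (fun ω' => W ω' i * X ω') μ := aux_mul_integrable (hWi i) hX
    have heq : (fun ω' => W ω' i * (Y ω' - c * X ω'))
        = fun ω' => W ω' i * Y ω' - c * (W ω' i * X ω') := by funext ω'; ring
    rw [heq, integral_sub h1 (h2.const_mul c), integral_const_mul]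
    simp
  rw [hv, Matrix.mulVec_sub, Matrix.mulVec_smul]
  rw [Finset.mul_sum, ← Finset.sum_sub_distrib]
  congr 1
  funext i
  simp [sub_mul, mul_assoc]

end Aux


lemma aux_main {Ω : Type*} {m : MeasurableSpace Ω} {m0 : MeasurableSpace Ω}
    (μ : Measure Ω) [IsProbabilityMeasure μ] (hm : m ≤ m0)
    {k : ℕ} (W : Ω → Fin k → ℝ) (Y X Z : Ω → ℝ)
    (hY : MemLp Y 2 μ) (hX : MemLp X 2 μ) (hZ : MemLp Z 2 μ)
    (hWi : ∀ i, MemLp (fun ω => W ω i) 2 μ)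
    (hsmL : ∀ R : Ω → ℝ, StronglyMeasurable[m] (Lproj μ k W R))
    (hden : (∫ ω, (X ω - (μ[X|m]) ω) * (Z ω - (μ[Z|m]) ω) ∂μ) ≠ 0)
    (βs : ℝ)
    (hβ : βs = (∫ ω, (Y ω - (μ[Y|m]) ω) * (Z ω - (μ[Z|m]) ω) ∂μ) /
        (∫ ω, (X ω - (μ[X|m]) ω) * (Z ω - (μ[Z|m]) ω) ∂μ)) :
    (∫ ω, (Y ω - Lproj μ k W Y ω) * (Z ω - Lproj μ k W Z ω) ∂μ) =
      βs * (∫ ω, (X ω - Lproj μ k W X ω) * (Z ω - Lproj μ k W Z ω) ∂μ) +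
        ∫ ω, ((μ[(fun ω' => Y ω' - βs * X ω')|m]) ω -
            Lproj μ k W (fun ω' => Y ω' - βs * X ω') ω) *
          ((μ[Z|m]) ω - Lproj μ k W Z ω) ∂μ := by
  classical
  set A : Ω → ℝ := fun ω' => Y ω' - βs * X ω' with hAdef
  have hA : MemLp A 2 μ := hY.sub (hX.const_mul βs)
  have hEY := aux_memLp_condexp hm hY
  have hEX := aux_memLp_condexp hm hX
  have hEZ := aux_memLp_condexp hm hZ
  have hEA := aux_memLp_condexp hm hA
  have hLY := aux_memLp_Lproj μ k W Y hWi
  have hLX := aux_memLp_Lproj μ k W X hWi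
  have hLZ := aux_memLp_Lproj μ k W Z hWi
  have hLA := aux_memLp_Lproj μ k W A hWi
  have rY : MemLp (fun ω => Y ω - (μ[Y|m]) ω) 2 μ := hY.sub hEY
  have rX : MemLp (fun ω => X ω - (μ[X|m]) ω) 2 μ := hX.sub hEX
  have rZ : MemLp (fun ω => Z ω - (μ[Z|m]) ω) 2 μ := hZ.sub hEZ
  have rA : MemLp (fun ω => A ω - (μ[A|m]) ω) 2 μ := hA.sub hEA
  have sY : MemLp (fun ω => Y ω - Lproj μ k W Y ω) 2 μ := hY.sub hLY
  have sX : MemLp (fun ω => X ω - Lproj μ k W X ω) 2 μ := hX.sub hLX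
  have sZ : MemLp (fun ω => Z ω - Lproj μ k W Z ω) 2 μ := hZ.sub hLZ
  have tZ : MemLp (fun ω => (μ[Z|m]) ω - Lproj μ k W Z ω) 2 μ := hEZ.sub hLZ
  have tA : MemLp (fun ω => (μ[A|m]) ω - Lproj μ k W A ω) 2 μ := hEA.sub hLA
  -- βs * I2 = I1
  have hI : βs * (∫ ω, (X ω - (μ[X|m]) ω) * (Z ω - (μ[Z|m]) ω) ∂μ)
      = ∫ ω, (Y ω - (μ[Y|m]) ω) * (Z ω - (μ[Z|m]) ω) ∂μ := by
    rw [hβ]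
    exact div_mul_cancel₀ _ hden
  -- conditional expectation linearity for A
  have hEAeq : μ[A|m] =ᵐ[μ] fun ω => (μ[Y|m]) ω - βs * (μ[X|m]) ω := by
    have h1 : μ[(Y - βs • X : Ω → ℝ)|m] =ᵐ[μ] μ[Y|m] - μ[(βs • X : Ω → ℝ)|m] :=
      condExp_sub (hY.integrable one_le_two) (((hX.const_mul βs).integrable one_le_two)) m
    have h2 : μ[(βs • X : Ω → ℝ)|m] =ᵐ[μ] βs • μ[X|m] := condExp_smul βs X m
    have hAe : A = (Y - βs • X : Ω → ℝ) := by funext ω; simp [hAdef, smul_eq_mul]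
    rw [hAe]
    filter_upwards [h1, h2] with ω h1ω h2ω
    simp only [Pi.sub_apply, Pi.smul_apply, smul_eq_mul] at h1ω h2ω ⊢
    rw [h1ω, h2ω]
  -- Term 1 : ∫ (A - EA)(Z - EZ) = 0
  have hT1 : ∫ ω, (A ω - (μ[A|m]) ω) * (Z ω - (μ[Z|m]) ω) ∂μ = 0 := by
    have hcong : (fun ω => (A ω - (μ[A|m]) ω) * (Z ω - (μ[Z|m]) ω))
        =ᵐ[μ] fun ω => (Y ω - (μ[Y|m]) ω) * (Z ω - (μ[Z|m]) ω)
          - βs * ((X ω - (μ[X|m]) ω) * (Z ω - (μ[Z|m]) ω)) := by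
      filter_upwards [hEAeq] with ω hω
      have hAω : A ω = Y ω - βs * X ω := rfl
      rw [hAω, hω]
      ring
    rw [integral_congr_ae hcong,
      integral_sub (aux_mul_integrable rY rZ)
        ((aux_mul_integrable rX rZ).const_mul βs),
      integral_const_mul, hI]
    ring
  -- strong measurability facts
  have hsmEZ : StronglyMeasurable[m] (fun ω => (μ[Z|m]) ω - Lproj μ k W Z ω) :=
    stronglyMeasurable_condExp.sub (hsmL Z)
  have hsmEA : StronglyMeasurable[m] (fun ω => (μ[A|m]) ω - Lproj μ k W A ω) :=
    stronglyMeasurable_condExp.sub (hsmL A)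
  -- Term 2 : ∫ (A - EA)(EZ - LZ) = 0
  have hT2 : ∫ ω, (A ω - (μ[A|m]) ω) * ((μ[Z|m]) ω - Lproj μ k W Z ω) ∂μ = 0 :=
    aux_ortho hm hA tZ hsmEZ
  -- Term 3 : ∫ (EA - LA)(Z - EZ) = 0
  have hT3 : ∫ ω, ((μ[A|m]) ω - Lproj μ k W A ω) * (Z ω - (μ[Z|m]) ω) ∂μ = 0 := by
    have h := aux_ortho hm hZ tA hsmEA
    calc ∫ ω, ((μ[A|m]) ω - Lproj μ k W A ω) * (Z ω - (μ[Z|m]) ω) ∂μ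
        = ∫ ω, (Z ω - (μ[Z|m]) ω) * ((μ[A|m]) ω - Lproj μ k W A ω) ∂μ := by
          congr 1; funext ω; ring
      _ = 0 := h
  -- decomposition of ∫ (A - LA)(Z - LZ)
  have hsplit : ∫ ω, (A ω - Lproj μ k W A ω) * (Z ω - Lproj μ k W Z ω) ∂μ
      = (∫ ω, (A ω - (μ[A|m]) ω) * (Z ω - (μ[Z|m]) ω) ∂μ)
        + (∫ ω, (A ω - (μ[A|m]) ω) * ((μ[Z|m]) ω - Lproj μ k W Z ω) ∂μ)
        + (∫ ω, ((μ[A|m]) ω - Lproj μ k W A ω) * (Z ω - (μ[Z|m]) ω) ∂μ)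
        + (∫ ω, ((μ[A|m]) ω - Lproj μ k W A ω) * ((μ[Z|m]) ω - Lproj μ k W Z ω) ∂μ) := by
    have i1 := aux_mul_integrable rA rZ
    have i2 := aux_mul_integrable rA tZ
    have i3 := aux_mul_integrable tA rZ
    have i4 := aux_mul_integrable tA tZ
    have i12 : Integrable (fun ω => (A ω - (μ[A|m]) ω) * (Z ω - (μ[Z|m]) ω)
        + (A ω - (μ[A|m]) ω) * ((μ[Z|m]) ω - Lproj μ k W Z ω)) μ := i1.add i2
    have i123 : Integrable (fun ω => ((A ω - (μ[A|m]) ω) * (Z ω - (μ[Z|m]) ω)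
        + (A ω - (μ[A|m]) ω) * ((μ[Z|m]) ω - Lproj μ k W Z ω))
        + ((μ[A|m]) ω - Lproj μ k W A ω) * (Z ω - (μ[Z|m]) ω)) μ := i12.add i3
    have hshow : (fun ω => (A ω - Lproj μ k W A ω) * (Z ω - Lproj μ k W Z ω))
        = fun ω => (((A ω - (μ[A|m]) ω) * (Z ω - (μ[Z|m]) ω)
            + (A ω - (μ[A|m]) ω) * ((μ[Z|m]) ω - Lproj μ k W Z ω))
            + ((μ[A|m]) ω - Lproj μ k W A ω) * (Z ω - (μ[Z|m]) ω))
            + ((μ[A|m]) ω - Lproj μ k W A ω) * ((μ[Z|m]) ω - Lproj μ k W Z ω) := by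
      funext ω; ring
    rw [hshow, integral_add i123 i4, integral_add i12 i3, integral_add i1 i2]
  -- linearity of Lproj
  have hLAeq : ∀ ω, Lproj μ k W A ω = Lproj μ k W Y ω - βs * Lproj μ k W X ω :=
    aux_Lproj_sub μ k W Y X βs hWi hY hX
  -- ∫ (A - LA)(Z - LZ) = ∫ (Y-LY)(Z-LZ) - βs ∫ (X-LX)(Z-LZ)
  have hALZ : ∫ ω, (A ω - Lproj μ k W A ω) * (Z ω - Lproj μ k W Z ω) ∂μ
      = (∫ ω, (Y ω - Lproj μ k W Y ω) * (Z ω - Lproj μ k W Z ω) ∂μ)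
        - βs * (∫ ω, (X ω - Lproj μ k W X ω) * (Z ω - Lproj μ k W Z ω) ∂μ) := by
    have hcong : (fun ω => (A ω - Lproj μ k W A ω) * (Z ω - Lproj μ k W Z ω))
        = fun ω => (Y ω - Lproj μ k W Y ω) * (Z ω - Lproj μ k W Z ω)
          - βs * ((X ω - Lproj μ k W X ω) * (Z ω - Lproj μ k W Z ω)) := by
      funext ω
      have hAω : A ω = Y ω - βs * X ω := rfl
      rw [hLAeq ω, hAω]
      ring
    rw [hcong,
      integral_sub (aux_mul_integrable sY sZ)
        ((aux_mul_integrable sX sZ).const_mul βs),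
      integral_const_mul]
  rw [hT1, hT2, hT3] at hsplit
  simp only [zero_add, add_zero] at hsplit
  linarith [hsplit, hALZ]

theorem stmt_8 {Ω : Type*} [MeasurableSpace Ω] (μ : Measure Ω) [IsProbabilityMeasure μ]
    {k : ℕ} (W : Ω → Fin k → ℝ) (Y X Z : Ω → ℝ)
    (hW : Measurable W)
    (hY : MeasureTheory.MemLp Y 2 μ) (hX : MeasureTheory.MemLp X 2 μ)
    (hZ : MeasureTheory.MemLp Z 2 μ)
    (hWi : ∀ i, MeasureTheory.MemLp (fun ω => W ω i) 2 μ)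
    (hinv : IsUnit ((Matrix.of fun i j => ∫ ω, W ω i * W ω j ∂μ : Matrix (Fin k) (Fin k) ℝ)))
    (hden : (∫ ω, (X ω - condExpW μ k W X ω) * (Z ω - condExpW μ k W Z ω) ∂μ) ≠ 0)
    (βs : ℝ)
    (hβ : βs = (∫ ω, (Y ω - condExpW μ k W Y ω) * (Z ω - condExpW μ k W Z ω) ∂μ) /
        (∫ ω, (X ω - condExpW μ k W X ω) * (Z ω - condExpW μ k W Z ω) ∂μ)) :
    (∫ ω, (Y ω - Lproj μ k W Y ω) * (Z ω - Lproj μ k W Z ω) ∂μ) =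
      βs * (∫ ω, (X ω - Lproj μ k W X ω) * (Z ω - Lproj μ k W Z ω) ∂μ) +
        ∫ ω, (condExpW μ k W (fun ω' => Y ω' - βs * X ω') ω -
            Lproj μ k W (fun ω' => Y ω' - βs * X ω') ω) *
          (condExpW μ k W Z ω - Lproj μ k W Z ω) ∂μ :=
  aux_main μ hW.comap_le W Y X Z hY hX hZ hWi (fun R => aux_sm_Lproj μ k W R) hden βs hβ
end

section
/- Let X be a bounded random variable, Z a random variable with Cov(X,Z) ≠ 0, and g : ℝ → ℝ continuously differentiable. Suppose additionally that for every x, Cov(𝟙{X ≥ x}, Z) ≥ 0 and that g' ≥ c for a constant c ∈ ℝ. Then Cov(g(X), Z)/Cov(X, Z) ≥ c whenever Cov(X,Z) > 0. -/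
open MeasureTheory

theorem stmt_18 {Ω : Type*} [MeasurableSpace Ω] (μ : Measure Ω) [IsProbabilityMeasure μ]
    (X Z : Ω → ℝ) (g : ℝ → ℝ) (c : ℝ)
    (hXm : Measurable X) (hZm : Measurable Z)
    (MX : ℝ) (hXbdd : ∀ ω, |X ω| ≤ MX)
    (hZ : Integrable Z μ) (hXZ : Integrable (fun ω => X ω * Z ω) μ)
    (hg : ContDiff ℝ 1 g)
    (hcov : Cov μ X Z ≠ 0)
    (hwts : ∀ x : ℝ, Cov μ (fun ω => if X ω ≥ x then (1:ℝ) else 0) Z ≥ 0)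
    (hg' : ∀ x : ℝ, deriv g x ≥ c)
    (hpos : Cov μ X Z > 0) :
    Cov μ (fun ω => g (X ω)) Z / Cov μ X Z ≥ c := by
  classical
  -- basic setup
  have hne : Nonempty Ω := by
    by_contra hcon
    rw [not_nonempty_iff] at hcon
    have h1 := measure_univ (μ := μ)
    rw [Set.univ_eq_empty_iff.2 hcon, measure_empty] at h1
    simp at h1
  have hM0 : (0:ℝ) ≤ MX := le_trans (abs_nonneg _) (hXbdd (Classical.arbitrary Ω))
  have hMM : -MX ≤ MX := by linarith
  set φ : ℝ → ℝ := fun x => deriv g x - c with hφdef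
  have hgdiff : Differentiable ℝ g := hg.differentiable one_ne_zero
  have hgderiv : Continuous (deriv g) := hg.continuous_deriv le_rfl
  have hφcont : Continuous φ := hgderiv.sub continuous_const
  set h : ℝ → ℝ := fun t => g t - c * t with hhdef
  have hdiff : ∀ t : ℝ, HasDerivAt h (φ t) t := by
    intro t
    exact (hgdiff t).hasDerivAt.sub (by simpa using (hasDerivAt_id t).const_mul c)
  set Z' : Ω → ℝ := fun ω => Z ω - ∫ ω, Z ω ∂μ with hZ'def
  have hZ'int : Integrable Z' μ := hZ.sub (integrable_const _)
  have hZ'0 : ∫ ω, Z' ω ∂μ = 0 := by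
    rw [integral_sub hZ (integrable_const _), integral_const]
    simp
  -- covariance representation
  have covRep : ∀ A : Ω → ℝ, Integrable A μ → Integrable (fun ω => A ω * Z ω) μ →
      Cov μ A Z = ∫ ω, A ω * Z' ω ∂μ := by
    intro A hA hAZ
    have : (fun ω => A ω * Z' ω) = fun ω => A ω * Z ω - A ω * (∫ ω, Z ω ∂μ) := by
      funext ω; simp [hZ'def]; ring
    rw [this, integral_sub hAZ (hA.mul_const _), integral_mul_const]
    rfl
  -- integrability facts
  have hXint : Integrable X μ := by
    refine Integrable.mono' (integrable_const MX) hXm.aestronglyMeasurable ?_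
    exact Filter.Eventually.of_forall fun ω => by simpa using hXbdd ω
  have hXmem : ∀ ω, X ω ∈ Set.Icc (-MX) MX := by
    intro ω
    have := abs_le.1 (hXbdd ω)
    exact ⟨this.1, this.2⟩
  obtain ⟨Cg, hCg⟩ : ∃ C, ∀ x ∈ Set.Icc (-MX) MX, ‖g x‖ ≤ C :=
    isCompact_Icc.exists_bound_of_continuousOn hg.continuous.continuousOn
  have hgXm : Measurable fun ω => g (X ω) := hg.continuous.measurable.comp hXm
  have hgX : Integrable (fun ω => g (X ω)) μ := by
    refine Integrable.mono' (integrable_const Cg) hgXm.aestronglyMeasurable ?_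
    exact Filter.Eventually.of_forall fun ω => hCg _ (hXmem ω)
  have hgXZ : Integrable (fun ω => g (X ω) * Z ω) μ := by
    refine Integrable.mono' (hZ.norm.const_mul Cg) (hgXm.mul hZm).aestronglyMeasurable ?_
    refine Filter.Eventually.of_forall fun ω => ?_
    rw [norm_mul]
    exact mul_le_mul_of_nonneg_right (hCg _ (hXmem ω)) (norm_nonneg _)
  have hhX : Integrable (fun ω => h (X ω)) μ := by
    have : (fun ω => h (X ω)) = fun ω => g (X ω) - c * X ω := by funext ω; rfl
    rw [this]; exact hgX.sub (hXint.const_mul c)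
  have hhXZ : Integrable (fun ω => h (X ω) * Z ω) μ := by
    have : (fun ω => h (X ω) * Z ω) = fun ω => g (X ω) * Z ω - c * (X ω * Z ω) := by
      funext ω; simp [hhdef]; ring
    rw [this]; exact hgXZ.sub (hXZ.const_mul c)
  have hhXZ' : Integrable (fun ω => h (X ω) * Z' ω) μ := by
    have : (fun ω => h (X ω) * Z' ω) = fun ω => h (X ω) * Z ω - (h (X ω)) * (∫ ω, Z ω ∂μ) := by
      funext ω; simp [hZ'def]; ring
    rw [this]; exact hhXZ.sub (hhX.mul_const _)
  -- indicator integrability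
  have hindm : ∀ x : ℝ, Measurable fun ω => if X ω ≥ x then (1:ℝ) else 0 := by
    intro x
    exact Measurable.ite (measurableSet_le measurable_const hXm) measurable_const measurable_const
  have hindint : ∀ x : ℝ, Integrable (fun ω => if X ω ≥ x then (1:ℝ) else 0) μ := by
    intro x
    refine Integrable.mono' (integrable_const 1) (hindm x).aestronglyMeasurable ?_
    refine Filter.Eventually.of_forall fun ω => ?_
    by_cases hc : X ω ≥ x <;> simp [hc]
  have hindZint : ∀ x : ℝ, Integrable (fun ω => (if X ω ≥ x then (1:ℝ) else 0) * Z ω) μ := by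
    intro x
    refine Integrable.mono' hZ.norm ((hindm x).mul hZm).aestronglyMeasurable ?_
    refine Filter.Eventually.of_forall fun ω => ?_
    rw [norm_mul]
    by_cases hc : X ω ≥ x <;> simp [hc]
  -- pointwise FTC identity
  have hpt : ∀ ω, h (X ω) - h (-MX) =
      ∫ x in Set.Ioc (-MX) MX, (if x ≤ X ω then φ x else 0) := by
    intro ω
    have hftc : ∫ x in (-MX)..(X ω), φ x = h (X ω) - h (-MX) :=
      intervalIntegral.integral_eq_sub_of_hasDerivAt (fun x _ => hdiff x)
        (hφcont.intervalIntegrable _ _)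
    have hind := intervalIntegral.integral_indicator (f := φ) (μ := volume)
      (a₁ := -MX) (a₂ := X ω) (a₃ := MX) (hXmem ω)
    rw [hftc] at hind
    rw [← hind, intervalIntegral.integral_of_le hMM]
    refine setIntegral_congr_fun measurableSet_Ioc fun x _ => ?_
    simp [Set.indicator_apply]
  -- Fubini setup
  set ν : Measure ℝ := volume.restrict (Set.Ioc (-MX) MX) with hνdef
  haveI : IsFiniteMeasure ν := by
    constructor
    rw [hνdef, Measure.restrict_apply_univ]
    exact (Real.volume_Ioc (a := -MX) (b := MX)) ▸ ENNReal.ofReal_lt_top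
  set F : Ω → ℝ → ℝ := fun ω x => (if x ≤ X ω then φ x else 0) * Z' ω with hFdef
  obtain ⟨Cφ, hCφ⟩ : ∃ C, ∀ x ∈ Set.Icc (-MX) MX, ‖φ x‖ ≤ C :=
    isCompact_Icc.exists_bound_of_continuousOn hφcont.continuousOn
  have hCφ0 : 0 ≤ Cφ := le_trans (norm_nonneg _) (hCφ MX ⟨hMM, le_rfl⟩)
  have hFmeas : Measurable (Function.uncurry F) := by
    have hset : MeasurableSet {p : Ω × ℝ | p.2 ≤ X p.1} :=
      measurableSet_le measurable_snd (hXm.comp measurable_fst)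
    exact (Measurable.ite hset (hφcont.measurable.comp measurable_snd) measurable_const).mul
      ((hZm.sub measurable_const).comp measurable_fst)
  have hae : ∀ᵐ p : Ω × ℝ ∂(μ.prod ν), p.2 ∈ Set.Ioc (-MX) MX := by
    rw [ae_iff]
    have hs : {p : Ω × ℝ | ¬ p.2 ∈ Set.Ioc (-MX) MX} = Set.univ ×ˢ (Set.Ioc (-MX) MX)ᶜ := by
      ext p; simp
    rw [hs, Measure.prod_prod]
    rw [hνdef, Measure.restrict_apply measurableSet_Ioc.compl]
    simp
  have hFint : Integrable (Function.uncurry F) (μ.prod ν) := by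
    have hbd : Integrable (fun p : Ω × ℝ => ‖Z' p.1‖ * Cφ) (μ.prod ν) :=
      Integrable.mul_prod hZ'int.norm (integrable_const Cφ)
    refine Integrable.mono' hbd hFmeas.aestronglyMeasurable ?_
    filter_upwards [hae] with p hp
    have hmem : p.2 ∈ Set.Icc (-MX) MX := Set.Ioc_subset_Icc_self hp
    simp only [Function.uncurry, hFdef, norm_mul]
    by_cases hc : p.2 ≤ X p.1
    · simp only [hc, if_true]
      rw [mul_comm]
      exact mul_le_mul_of_nonneg_left (hCφ _ hmem) (norm_nonneg _)
    · simp only [hc, if_false]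
      simp
      positivity
  -- main computation
  have key : Cov μ (fun ω => h (X ω)) Z = ∫ x in Set.Ioc (-MX) MX, φ x *
      Cov μ (fun ω => if X ω ≥ x then (1:ℝ) else 0) Z := by
    rw [covRep _ hhX hhXZ]
    have e1 : ∫ ω, h (X ω) * Z' ω ∂μ = ∫ ω, (h (X ω) - h (-MX)) * Z' ω ∂μ := by
      have : (fun ω => (h (X ω) - h (-MX)) * Z' ω)
          = fun ω => h (X ω) * Z' ω - h (-MX) * Z' ω := by funext ω; ring
      rw [this, integral_sub hhXZ' (hZ'int.const_mul _), integral_const_mul, hZ'0]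
      ring
    rw [e1]
    have e2 : ∀ ω, (h (X ω) - h (-MX)) * Z' ω = ∫ x, F ω x ∂ν := by
      intro ω
      rw [hpt ω]
      rw [← integral_mul_const]
    calc ∫ ω, (h (X ω) - h (-MX)) * Z' ω ∂μ = ∫ ω, ∫ x, F ω x ∂ν ∂μ := by
          exact integral_congr_ae (Filter.Eventually.of_forall e2)
      _ = ∫ x, ∫ ω, F ω x ∂μ ∂ν := integral_integral_swap hFint
      _ = ∫ x in Set.Ioc (-MX) MX, φ x *
            Cov μ (fun ω => if X ω ≥ x then (1:ℝ) else 0) Z := by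
          rw [hνdef]
          refine setIntegral_congr_fun measurableSet_Ioc fun x _ => ?_
          rw [covRep _ (hindint x) (hindZint x), ← integral_const_mul]
          refine integral_congr_ae (Filter.Eventually.of_forall fun ω => ?_)
          simp only [hFdef, ge_iff_le]
          by_cases hc : x ≤ X ω <;> simp [hc]
  have hkey0 : (0:ℝ) ≤ Cov μ (fun ω => h (X ω)) Z := by
    rw [key]
    refine setIntegral_nonneg measurableSet_Ioc fun x _ => ?_
    exact mul_nonneg (by simp [hφdef]; linarith [hg' x]) (hwts x)
  have hsplit : Cov μ (fun ω => h (X ω)) Z =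
      Cov μ (fun ω => g (X ω)) Z - c * Cov μ X Z := by
    simp only [Cov]
    have e3 : ∫ ω, h (X ω) * Z ω ∂μ = ∫ ω, g (X ω) * Z ω ∂μ - c * ∫ ω, X ω * Z ω ∂μ := by
      have : (fun ω => h (X ω) * Z ω) = fun ω => g (X ω) * Z ω - c * (X ω * Z ω) := by
        funext ω; simp [hhdef]; ring
      rw [this, integral_sub hgXZ (hXZ.const_mul c), integral_const_mul]
    have e4 : ∫ ω, h (X ω) ∂μ = ∫ ω, g (X ω) ∂μ - c * ∫ ω, X ω ∂μ := by
      have : (fun ω => h (X ω)) = fun ω => g (X ω) - c * X ω := by funext ω; rfl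
      rw [this, integral_sub hgX (hXint.const_mul c), integral_const_mul]
    rw [e3, e4]
    ring
  rw [ge_iff_le, le_div_iff₀ hpos]
  rw [hsplit] at hkey0
  linarith
end
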